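/- Let y = (y₁,y₂) with y_i = μ_i + Z_i, Z₁,Z₂ i.i.d. standard normal, let γ̂ = argmax_{γ∈{1,2}} y_γ, and let q^β(k) denote the 1−β quantile of max_{i∈[k]}|Z_i| for i.i.d. standard normals. Define Ĝ⁺ = {1,2} if |y₂−y₁| ≤ 2√2·q^{0.1α}(1) and Ĝ⁺ = {γ̂} otherwise. Then P{μ_{γ̂} ∈ (y_{γ̂} − q^{0.9α}(|Ĝ⁺|), y_{γ̂} + q^{0.9α}(|Ĝ⁺|))} ≥ 1 − α. -/

import Mathlib

open MeasureTheory ProbabilityTheory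
open scoped ENNReal NNReal

/-- The 1−β quantile of the maximum of k i.i.d. standard normal absolute values. -/
noncomputable def maxAbsQuantile (β : ℝ) (k : ℕ) : ℝ :=
  sInf {t : ℝ | ENNReal.ofReal (1 - β) ≤
    (Measure.pi fun _ : Fin k => gaussianReal 0 1) {z | ∀ i, |z i| ≤ t}}

lemma box_eq (k : ℕ) (t : ℝ) :
    {z : Fin k → ℝ | ∀ i, |z i| ≤ t} = Set.pi Set.univ (fun _ => Set.Icc (-t) t) := by
  ext z; simp [Set.mem_pi, abs_le, Pi.le_def, forall_and]

lemma m_eq (k : ℕ) (t : ℝ) :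
    (Measure.pi fun _ : Fin k => gaussianReal 0 1) {z | ∀ i, |z i| ≤ t}
      = (gaussianReal 0 1 (Set.Icc (-t) t)) ^ k := by
  rw [box_eq, Measure.pi_pi]; simp

lemma box_measurable (k : ℕ) (t : ℝ) :
    MeasurableSet {z : Fin k → ℝ | ∀ i, |z i| ≤ t} := by
  rw [box_eq]
  exact MeasurableSet.univ_pi fun _ => measurableSet_Icc

noncomputable def Pk (k : ℕ) : Measure (Fin k → ℝ) := Measure.pi fun _ => gaussianReal 0 1

def qSet (β : ℝ) (k : ℕ) : Set ℝ :=
  {t : ℝ | ENNReal.ofReal (1 - β) ≤ Pk k {z | ∀ i, |z i| ≤ t}}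

lemma maxAbsQuantile_eq (β : ℝ) (k : ℕ) : maxAbsQuantile β k = sInf (qSet β k) := rfl

instance (k : ℕ) : IsProbabilityMeasure (Pk k) := by
  unfold Pk; infer_instance

lemma Pk_mono {k : ℕ} {s t : ℝ} (h : s ≤ t) :
    Pk k {z | ∀ i, |z i| ≤ s} ≤ Pk k {z | ∀ i, |z i| ≤ t} :=
  measure_mono fun z hz i => le_trans (hz i) h

lemma qSet_nonempty {β : ℝ} (hβ : 0 < β) (k : ℕ) : (qSet β k).Nonempty := by
  have hmono : Monotone (fun n : ℕ => {z : Fin k → ℝ | ∀ i, |z i| ≤ (n : ℝ)}) := by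
    intro n m hnm z hz i
    exact le_trans (hz i) (by exact_mod_cast hnm)
  have hunion : (⋃ n : ℕ, {z : Fin k → ℝ | ∀ i, |z i| ≤ (n : ℝ)}) = Set.univ := by
    ext z
    simp only [Set.mem_iUnion, Set.mem_univ, iff_true, Set.mem_setOf_eq]
    obtain ⟨M, hM⟩ := (Finset.univ.image fun i => |z i|).exists_le
    obtain ⟨n, hn⟩ := exists_nat_ge M
    exact ⟨n, fun i => le_trans (hM _ (Finset.mem_image_of_mem _ (Finset.mem_univ i))) hn⟩
  have htend := tendsto_measure_iUnion_atTop (μ := Pk k) hmono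
  rw [hunion, measure_univ] at htend
  have hlt : ENNReal.ofReal (1 - β) < 1 := ENNReal.ofReal_lt_one.2 (by linarith)
  have := htend.eventually (eventually_gt_nhds hlt)
  obtain ⟨n, hn⟩ := this.exists
  exact ⟨(n : ℝ), le_of_lt hn⟩

lemma qSet_subset_Ici {β : ℝ} (hβ1 : β < 1) {k : ℕ} (hk : 0 < k) :
    qSet β k ⊆ Set.Ici (0 : ℝ) := by
  intro t ht
  by_contra hlt
  simp only [Set.mem_Ici, not_le] at hlt
  have hempty : {z : Fin k → ℝ | ∀ i, |z i| ≤ t} = ∅ := by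
    ext z
    simp only [Set.mem_setOf_eq, Set.mem_empty_iff_false, iff_false, not_forall]
    exact ⟨⟨0, hk⟩, by push_neg; exact lt_of_lt_of_le hlt (abs_nonneg _)⟩
  have h2 : ENNReal.ofReal (1 - β) ≤ Pk k {z : Fin k → ℝ | ∀ i, |z i| ≤ t} := ht
  rw [hempty, measure_empty] at h2
  rw [nonpos_iff_eq_zero, ENNReal.ofReal_eq_zero] at h2
  linarith

lemma qSet_bddBelow {β : ℝ} (hβ1 : β < 1) {k : ℕ} (hk : 0 < k) :
    BddBelow (qSet β k) :=
  ⟨0, fun t ht => qSet_subset_Ici hβ1 hk ht⟩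

lemma maxAbsQuantile_nonneg {β : ℝ} (hβ1 : β < 1) {k : ℕ} (hk : 0 < k) :
    0 ≤ maxAbsQuantile β k := by
  rw [maxAbsQuantile_eq]
  exact Real.sInf_nonneg fun x hx => qSet_subset_Ici hβ1 hk hx

lemma maxAbsQuantile_attained {β : ℝ} (hβ0 : 0 < β) (hβ1 : β < 1) {k : ℕ} (hk : 0 < k) :
    ENNReal.ofReal (1 - β) ≤ Pk k {z | ∀ i, |z i| ≤ maxAbsQuantile β k} := by
  set q := maxAbsQuantile β k with hq
  have hqs : q = sInf (qSet β k) := maxAbsQuantile_eq β k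
  have hne : (qSet β k).Nonempty := qSet_nonempty hβ0 k
  have hmem : ∀ n : ℕ, ENNReal.ofReal (1 - β) ≤
      Pk k {z | ∀ i, |z i| ≤ q + 1 / (n + 1)} := by
    intro n
    obtain ⟨a, ha, halt⟩ := Real.lt_sInf_add_pos hne
      (by positivity : (0:ℝ) < 1 / (n + 1))
    rw [← hqs] at halt
    exact le_trans ha (Pk_mono (le_of_lt halt))
  have hinter : {z : Fin k → ℝ | ∀ i, |z i| ≤ q}
      = ⋂ n : ℕ, {z | ∀ i, |z i| ≤ q + 1 / (n + 1)} := by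
    ext z
    simp only [Set.mem_setOf_eq, Set.mem_iInter]
    constructor
    · intro h n i
      have : (0:ℝ) < 1 / (n + 1) := by positivity
      linarith [h i]
    · intro h i
      refine le_of_forall_pos_le_add fun ε hε => ?_
      obtain ⟨n, hn⟩ := exists_nat_one_div_lt hε
      have := h n i
      linarith
  have hanti : Antitone (fun n : ℕ => {z : Fin k → ℝ | ∀ i, |z i| ≤ q + 1 / (n + 1)}) := by
    intro n m hnm z hz i
    have h1 : (1:ℝ) / (m + 1) ≤ 1 / (n + 1) := by
      apply one_div_le_one_div_of_le (by positivity)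
      exact_mod_cast Nat.succ_le_succ hnm
    linarith [hz i]
  have htend := tendsto_measure_iInter_atTop (μ := Pk k)
    (fun n => (box_measurable k _).nullMeasurableSet) hanti
    ⟨0, measure_ne_top _ _⟩
  rw [← hinter] at htend
  exact ge_of_tendsto' htend hmem

lemma maxAbsQuantile_one_le_two {β : ℝ} (hβ0 : 0 < β) (hβ1 : β < 1) :
    maxAbsQuantile β 1 ≤ maxAbsQuantile β 2 := by
  rw [maxAbsQuantile_eq, maxAbsQuantile_eq]
  apply csInf_le_csInf (qSet_bddBelow hβ1 one_pos) (qSet_nonempty hβ0 2)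
  intro t ht
  have h2 : ENNReal.ofReal (1 - β) ≤ Pk 2 {z | ∀ i, |z i| ≤ t} := ht
  have h1 : Pk 2 {z : Fin 2 → ℝ | ∀ i, |z i| ≤ t} ≤ Pk 1 {z : Fin 1 → ℝ | ∀ i, |z i| ≤ t} := by
    rw [show Pk 2 = (Measure.pi fun _ : Fin 2 => gaussianReal 0 1) from rfl,
      show Pk 1 = (Measure.pi fun _ : Fin 1 => gaussianReal 0 1) from rfl, m_eq, m_eq]
    calc (gaussianReal 0 1 (Set.Icc (-t) t)) ^ 2
        = (gaussianReal 0 1 (Set.Icc (-t) t)) ^ 1 * gaussianReal 0 1 (Set.Icc (-t) t) := by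
          ring
      _ ≤ (gaussianReal 0 1 (Set.Icc (-t) t)) ^ 1 * 1 := by
          exact mul_le_mul_right prob_le_one _
      _ = (gaussianReal 0 1 (Set.Icc (-t) t)) ^ 1 := mul_one _
  exact le_trans h2 h1

lemma gauss_null_pair (c : ℝ) : gaussianReal 0 1 {-c, c} = 0 := by
  have habs := gaussianReal_absolutelyContinuous 0 (v := 1) (by norm_num)
  exact habs (Set.Finite.measure_zero (Set.toFinite _) _)

lemma gauss_Icc_le_Ioo (c : ℝ) :
    gaussianReal 0 1 (Set.Icc (-c) c) ≤ gaussianReal 0 1 (Set.Ioo (-c) c) := by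
  have hsub : Set.Icc (-c) c ⊆ Set.Ioo (-c) c ∪ {-c, c} := by
    intro x hx
    rcases eq_or_lt_of_le hx.1 with h | h
    · exact Or.inr (Or.inl h.symm)
    rcases eq_or_lt_of_le hx.2 with h2 | h2
    · exact Or.inr (Or.inr h2)
    exact Or.inl ⟨h, h2⟩
  calc gaussianReal 0 1 (Set.Icc (-c) c) ≤ gaussianReal 0 1 (Set.Ioo (-c) c ∪ {-c, c}) :=
        measure_mono hsub
    _ ≤ gaussianReal 0 1 (Set.Ioo (-c) c) + gaussianReal 0 1 {-c, c} := measure_union_le _ _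
    _ = gaussianReal 0 1 (Set.Ioo (-c) c) := by rw [gauss_null_pair, add_zero]

lemma gauss_Ioo_ge {β : ℝ} (hβ0 : 0 < β) (hβ1 : β < 1) :
    ENNReal.ofReal (1 - β) ≤
      gaussianReal 0 1 (Set.Ioo (-(maxAbsQuantile β 1)) (maxAbsQuantile β 1)) := by
  have h := maxAbsQuantile_attained hβ0 hβ1 one_pos
  rw [show Pk 1 = (Measure.pi fun _ : Fin 1 => gaussianReal 0 1) from rfl, m_eq, pow_one] at h
  exact le_trans h (gauss_Icc_le_Ioo _)

lemma P2_eval (i : Fin 2) (s : Set ℝ) (hs : MeasurableSet s) :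
    Pk 2 {z | z i ∈ s} = gaussianReal 0 1 s := by
  have hset : {z : Fin 2 → ℝ | z i ∈ s}
      = Set.pi Set.univ (Function.update (fun _ : Fin 2 => (Set.univ : Set ℝ)) i s) := by
    ext z
    simp only [Set.mem_setOf_eq, Set.mem_pi, Set.mem_univ, forall_true_left]
    constructor
    · intro h j
      rcases eq_or_ne j i with rfl | hne
      · simpa using h
      · simp [Function.update_apply, hne]
    · intro h
      have := h i
      simpa using this
  rw [show Pk 2 = (Measure.pi fun _ : Fin 2 => gaussianReal 0 1) from rfl, hset, Measure.pi_pi]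
  have : (fun j => gaussianReal 0 1 (Function.update (fun _ : Fin 2 => (Set.univ : Set ℝ)) i s j))
      = Function.update (fun _ : Fin 2 => gaussianReal 0 1 (Set.univ : Set ℝ)) i
          (gaussianReal 0 1 s) := by
    ext j
    rcases eq_or_ne j i with rfl | hne
    · simp
    · simp [Function.update_apply, hne]
  rw [this, Finset.prod_update_of_mem (Finset.mem_univ i)]
  simp

noncomputable def Tlin : ℝ × ℝ →ₗ[ℝ] ℝ × ℝ :=
  Matrix.toLin (Module.Basis.finTwoProd ℝ) (Module.Basis.finTwoProd ℝ)
    !![(Real.sqrt 2)⁻¹, (Real.sqrt 2)⁻¹; (Real.sqrt 2)⁻¹, -(Real.sqrt 2)⁻¹]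

lemma Tlin_apply (p : ℝ × ℝ) :
    Tlin p = ((p.1 + p.2) / Real.sqrt 2, (p.1 - p.2) / Real.sqrt 2) := by
  rw [Tlin, Matrix.toLin_finTwoProd_apply]
  rw [Prod.mk.injEq]
  constructor <;> field_simp <;> ring

lemma sqrt2_sq : (Real.sqrt 2)⁻¹ * (Real.sqrt 2)⁻¹ = 1 / 2 := by
  rw [← mul_inv]
  rw [← Real.sqrt_mul_self (by norm_num : (0:ℝ) ≤ 2)]
  norm_num

lemma Tlin_det : LinearMap.det Tlin = -1 := by
  rw [Tlin, LinearMap.det_toLin, Matrix.det_fin_two_of]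
  have := sqrt2_sq
  ring_nf
  nlinarith [sqrt2_sq]

lemma Tlin_measurable : Measurable Tlin := Tlin.continuous_of_finiteDimensional.measurable

lemma map_Tlin_volume : Measure.map Tlin (volume : Measure (ℝ × ℝ)) = volume := by
  rw [Measure.map_linearMap_addHaar_eq_smul_addHaar volume (by rw [Tlin_det]; norm_num),
    Tlin_det]
  norm_num

noncomputable def gpdf : ℝ → ℝ≥0∞ := gaussianPDF 0 1

lemma gpdf_meas : Measurable gpdf := measurable_gaussianPDF 0 1

lemma gauss_eq_withDensity : gaussianReal 0 1 = volume.withDensity gpdf :=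
  gaussianReal_of_var_ne_zero 0 (by norm_num)

noncomputable def ρ2 : ℝ × ℝ → ℝ≥0∞ := fun p => gpdf p.1 * gpdf p.2

lemma ρ2_meas : Measurable ρ2 :=
  (gpdf_meas.comp measurable_fst).mul (gpdf_meas.comp measurable_snd)

lemma gauss_prod_eq :
    (gaussianReal 0 1).prod (gaussianReal 0 1)
      = ((volume : Measure ℝ).prod volume).withDensity ρ2 := by
  refine Measure.prod_eq fun s t hs ht => ?_
  rw [withDensity_apply _ (hs.prod ht), ← Measure.prod_restrict]
  unfold ρ2
  rw [lintegral_prod_mul (gpdf_meas.aemeasurable) (gpdf_meas.aemeasurable)]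
  rw [gauss_eq_withDensity, withDensity_apply _ hs, withDensity_apply _ ht]

lemma ρ2_rot (p : ℝ × ℝ) : ρ2 (Tlin p) = ρ2 p := by
  rw [Tlin_apply]
  unfold ρ2 gpdf gaussianPDF
  rw [← ENNReal.ofReal_mul (gaussianPDFReal_nonneg _ _ _),
    ← ENNReal.ofReal_mul (gaussianPDFReal_nonneg _ _ _)]
  congr 1
  unfold gaussianPDFReal
  have h2 : Real.sqrt 2 ^ 2 = 2 := Real.sq_sqrt (by norm_num)
  have hne : Real.sqrt 2 ≠ 0 := by positivity
  have harr : ∀ C A B : ℝ, C * Real.exp A * (C * Real.exp B) = C * C * Real.exp (A + B) := by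
    intro C A B; rw [Real.exp_add]; ring
  rw [show (((p.1 + p.2) / Real.sqrt 2, (p.1 - p.2) / Real.sqrt 2) : ℝ × ℝ).1
      = (p.1 + p.2) / Real.sqrt 2 from rfl,
    show (((p.1 + p.2) / Real.sqrt 2, (p.1 - p.2) / Real.sqrt 2) : ℝ × ℝ).2
      = (p.1 - p.2) / Real.sqrt 2 from rfl, harr, harr]
  have key : ((p.1 + p.2) / Real.sqrt 2) ^ 2 + ((p.1 - p.2) / Real.sqrt 2) ^ 2
      = p.1 ^ 2 + p.2 ^ 2 := by
    rw [div_pow, div_pow, h2]; ring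
  congr 1
  push_cast
  simp only [sub_zero, mul_one]
  congr 1
  linarith [key]

lemma gauss_prod_rot {S : Set (ℝ × ℝ)} (hS : MeasurableSet S) :
    (gaussianReal 0 1).prod (gaussianReal 0 1) (Tlin ⁻¹' S)
      = (gaussianReal 0 1).prod (gaussianReal 0 1) S := by
  rw [gauss_prod_eq, ← Measure.volume_eq_prod,
    withDensity_apply _ (Tlin_measurable hS), withDensity_apply _ hS]
  have : ∫⁻ p in Tlin ⁻¹' S, ρ2 p = ∫⁻ p in Tlin ⁻¹' S, ρ2 (Tlin p) := by
    apply lintegral_congr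
    intro p
    rw [ρ2_rot]
  rw [this, ← setLIntegral_map hS ρ2_meas Tlin_measurable, map_Tlin_volume]

lemma P2_diff (t : ℝ) :
    Pk 2 {z | |z 1 - z 0| ≤ Real.sqrt 2 * t} = gaussianReal 0 1 (Set.Icc (-t) t) := by
  have hmp := measurePreserving_piFinTwo (fun _ : Fin 2 => gaussianReal 0 1)
  set S : Set (ℝ × ℝ) := {p | |p.2 - p.1| ≤ Real.sqrt 2 * t} with hSdef
  have hSmeas : MeasurableSet S :=
    measurableSet_le ((measurable_snd.sub measurable_fst).abs) measurable_const
  have hpre : {z : Fin 2 → ℝ | |z 1 - z 0| ≤ Real.sqrt 2 * t}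
      = (MeasurableEquiv.piFinTwo fun _ : Fin 2 => ℝ) ⁻¹' S := rfl
  rw [show Pk 2 = (Measure.pi fun _ : Fin 2 => gaussianReal 0 1) from rfl, hpre,
    hmp.measure_preimage hSmeas.nullMeasurableSet]
  have hrot : S = Tlin ⁻¹' (Set.univ ×ˢ Set.Icc (-t) t) := by
    ext p
    simp only [hSdef, Set.mem_setOf_eq, Set.mem_preimage, Tlin_apply, Set.mem_prod,
      Set.mem_univ, true_and, Set.mem_Icc, ← abs_le]
    rw [abs_div, abs_of_nonneg (Real.sqrt_nonneg 2), div_le_iff₀ (by positivity), mul_comm t,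
      abs_sub_comm]
  rw [hrot, gauss_prod_rot (MeasurableSet.univ.prod measurableSet_Icc), Measure.prod_prod,
    measure_univ, one_mul]

lemma compl_bound {Ω : Type*} [MeasurableSpace Ω] {μ : Measure Ω} [IsProbabilityMeasure μ]
    {E : Set Ω} (hE : MeasurableSet E) {c : ℝ} (hc1 : c ≤ 1)
    (h : ENNReal.ofReal (1 - c) ≤ μ E) : μ Eᶜ ≤ ENNReal.ofReal c := by
  rw [prob_compl_eq_one_sub hE]
  calc (1 : ℝ≥0∞) - μ E ≤ 1 - ENNReal.ofReal (1 - c) := tsub_le_tsub_left h 1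
    _ = ENNReal.ofReal c := by
        rw [← ENNReal.ofReal_one, ← ENNReal.ofReal_sub _ (by linarith : (0:ℝ) ≤ 1 - c)]
        norm_num

lemma gauss_Icc_ge {β : ℝ} (hβ0 : 0 < β) (hβ1 : β < 1) :
    ENNReal.ofReal (1 - β) ≤
      gaussianReal 0 1 (Set.Icc (-(maxAbsQuantile β 1)) (maxAbsQuantile β 1)) := by
  have h := maxAbsQuantile_attained hβ0 hβ1 one_pos
  rwa [show Pk 1 = (Measure.pi fun _ : Fin 1 => gaussianReal 0 1) from rfl, m_eq, pow_one] at h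

lemma P2_absIoo (i : Fin 2) (c : ℝ) :
    Pk 2 {z | |z i| < c} = gaussianReal 0 1 (Set.Ioo (-c) c) := by
  rw [show {z : Fin 2 → ℝ | |z i| < c} = {z | z i ∈ Set.Ioo (-c) c} by
    ext z; simp [abs_lt]]
  exact P2_eval i _ measurableSet_Ioo

lemma P2_openbox_ge {β : ℝ} (hβ0 : 0 < β) (hβ1 : β < 1) :
    ENNReal.ofReal (1 - β) ≤ Pk 2 {z | ∀ i, |z i| < maxAbsQuantile β 2} := by
  set c := maxAbsQuantile β 2 with hc
  have hc0 : 0 ≤ c := maxAbsQuantile_nonneg hβ1 two_pos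
  have hsub : {z : Fin 2 → ℝ | ∀ i, |z i| ≤ c}
      ⊆ {z | ∀ i, |z i| < c} ∪ ({z | z 0 ∈ ({-c, c} : Set ℝ)} ∪ {z | z 1 ∈ ({-c, c} : Set ℝ)}) := by
    intro z hz
    by_cases h : ∀ i, |z i| < c
    · exact Or.inl h
    · push_neg at h
      obtain ⟨i, hi⟩ := h
      have heq : |z i| = c := le_antisymm (hz i) hi
      have hmem : z i ∈ ({-c, c} : Set ℝ) := by
        rcases (abs_eq hc0).mp heq with h' | h'
        · exact Or.inr h'
        · exact Or.inl h'
      have h01 : i = 0 ∨ i = 1 := by omega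
      rcases h01 with rfl | rfl
      · exact Or.inr (Or.inl hmem)
      · exact Or.inr (Or.inr hmem)
  have hnull : Pk 2 ({z | z 0 ∈ ({-c, c} : Set ℝ)} ∪ {z | z 1 ∈ ({-c, c} : Set ℝ)}) = 0 := by
    apply measure_union_null <;>
      rw [P2_eval _ _ (Set.toFinite _).measurableSet] <;> exact gauss_null_pair c
  have hclosed : ENNReal.ofReal (1 - β) ≤ Pk 2 {z | ∀ i, |z i| ≤ c} :=
    maxAbsQuantile_attained hβ0 hβ1 two_pos
  calc ENNReal.ofReal (1 - β) ≤ Pk 2 {z | ∀ i, |z i| ≤ c} := hclosed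
    _ ≤ Pk 2 ({z | ∀ i, |z i| < c} ∪ _) := measure_mono hsub
    _ ≤ Pk 2 {z | ∀ i, |z i| < c} + Pk 2 _ := measure_union_le _ _
    _ = Pk 2 {z | ∀ i, |z i| < c} := by rw [hnull, add_zero]

/-- Two-armed inference on the winner: the locally simultaneous interval with
data-dependent plausible set is valid at level 1−α. -/
theorem two_armed_winner
    (μ : Fin 2 → ℝ) (α : ℝ) (hα : 0 < α) (hα1 : α < 1)
    (ghat : (Fin 2 → ℝ) → Fin 2)
    (hghat : ∀ (y : Fin 2 → ℝ) (i : Fin 2), y i ≤ y (ghat y)) :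
    ENNReal.ofReal (1 - α) ≤ (Measure.pi fun _ : Fin 2 => gaussianReal 0 1)
      {z | |(μ + z) (ghat (μ + z)) - μ (ghat (μ + z))| <
        maxAbsQuantile (0.9 * α)
          (if |(μ + z) 1 - (μ + z) 0| ≤
              2 * Real.sqrt 2 * maxAbsQuantile (0.1 * α) 1
           then 2 else 1)} := by
  have h01 : (0:ℝ) < 0.1 * α := by linarith
  have h011 : 0.1 * α < 1 := by linarith
  have h09 : (0:ℝ) < 0.9 * α := by linarith
  have h091 : 0.9 * α < 1 := by linarith
  set qν := maxAbsQuantile (0.1 * α) 1 with hqν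
  set q1 := maxAbsQuantile (0.9 * α) 1 with hq1
  set q2 := maxAbsQuantile (0.9 * α) 2 with hq2
  have hqν0 : 0 ≤ qν := maxAbsQuantile_nonneg h011 one_pos
  have hq12 : q1 ≤ q2 := maxAbsQuantile_one_le_two h09 h091
  set G := {z : Fin 2 → ℝ | |(μ + z) (ghat (μ + z)) - μ (ghat (μ + z))| <
        maxAbsQuantile (0.9 * α)
          (if |(μ + z) 1 - (μ + z) 0| ≤ 2 * Real.sqrt 2 * qν then 2 else 1)} with hG
  show ENNReal.ofReal (1 - α) ≤ Pk 2 G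
  -- the "nice" event A
  set A := {z : Fin 2 → ℝ | |z 1 - z 0| ≤ Real.sqrt 2 * qν} with hA
  have hAmeas : MeasurableSet A :=
    measurableSet_le (((measurable_pi_apply 1).sub (measurable_pi_apply 0)).abs)
      measurable_const
  have hPA : ENNReal.ofReal (1 - 0.1 * α) ≤ Pk 2 A := by
    rw [hA, P2_diff]
    exact gauss_Icc_ge h01 h011
  have hPAc : Pk 2 Aᶜ ≤ ENNReal.ofReal (0.1 * α) := compl_bound hAmeas (by linarith) hPA
  -- generic conclusion step
  have final : ∀ B : Set (Fin 2 → ℝ), MeasurableSet B → Bᶜ ⊆ G →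
      Pk 2 B ≤ ENNReal.ofReal α → ENNReal.ofReal (1 - α) ≤ Pk 2 G := by
    intro B hBmeas hsub hPB
    calc ENNReal.ofReal (1 - α) = 1 - ENNReal.ofReal α := by
          rw [← ENNReal.ofReal_one, ← ENNReal.ofReal_sub _ hα.le]
      _ ≤ 1 - Pk 2 B := tsub_le_tsub_left hPB 1
      _ = Pk 2 Bᶜ := (prob_compl_eq_one_sub hBmeas).symm
      _ ≤ Pk 2 G := measure_mono hsub
  have hadd : ENNReal.ofReal (0.1 * α) + ENNReal.ofReal (0.9 * α) = ENNReal.ofReal α := by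
    rw [← ENNReal.ofReal_add h01.le h09.le]
    congr 1
    ring
  have hsimp : ∀ z : Fin 2 → ℝ, (μ + z) (ghat (μ + z)) - μ (ghat (μ + z)) = z (ghat (μ + z)) := by
    intro z; simp
  have hdiff : ∀ z : Fin 2 → ℝ, (μ + z) 1 - (μ + z) 0 = (μ 1 - μ 0) + (z 1 - z 0) := by
    intro z; simp [Pi.add_apply]; ring
  have hfin2 : ∀ j : Fin 2, j = 0 ∨ j = 1 := by decide
  by_cases hD : |μ 1 - μ 0| ≤ Real.sqrt 2 * qν
  · -- small gap: condition always holds on A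
    set Obox := {z : Fin 2 → ℝ | ∀ i, |z i| < q2} with hObox
    have hOmeas : MeasurableSet Obox := by
      rw [hObox, show {z : Fin 2 → ℝ | ∀ i, |z i| < q2} = ⋂ i, {z | |z i| < q2} by
        ext z; simp]
      exact MeasurableSet.iInter fun i =>
        measurableSet_lt ((measurable_pi_apply i).abs) measurable_const
    have hPO : ENNReal.ofReal (1 - 0.9 * α) ≤ Pk 2 Obox := P2_openbox_ge h09 h091
    refine final (Aᶜ ∪ Oboxᶜ) (hAmeas.compl.union hOmeas.compl) ?_ ?_
    · intro z hz
      simp only [Set.compl_union, compl_compl, Set.mem_inter_iff] at hz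
      obtain ⟨hzA, hzO⟩ := hz
      have hcond : |(μ + z) 1 - (μ + z) 0| ≤ 2 * Real.sqrt 2 * qν := by
        rw [hdiff z]
        calc |(μ 1 - μ 0) + (z 1 - z 0)| ≤ |μ 1 - μ 0| + |z 1 - z 0| := abs_add_le _ _
          _ ≤ Real.sqrt 2 * qν + Real.sqrt 2 * qν := add_le_add hD hzA
          _ = 2 * Real.sqrt 2 * qν := by ring
      show z ∈ G
      rw [hG]
      simp only [Set.mem_setOf_eq, if_pos hcond, hsimp z]
      exact hzO (ghat (μ + z))
    · calc Pk 2 (Aᶜ ∪ Oboxᶜ) ≤ Pk 2 Aᶜ + Pk 2 Oboxᶜ := measure_union_le _ _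
        _ ≤ ENNReal.ofReal (0.1 * α) + ENNReal.ofReal (0.9 * α) :=
            add_le_add hPAc (compl_bound hOmeas (by linarith) hPO)
        _ = ENNReal.ofReal α := hadd
  · -- large gap: the winner is deterministic on A
    push_neg at hD
    have hDne : μ 1 ≠ μ 0 := by
      intro h
      rw [h, sub_self, abs_zero] at hD
      nlinarith [Real.sqrt_nonneg 2]
    -- the better arm
    obtain ⟨istar, histar⟩ : ∃ i : Fin 2, ∀ z ∈ A, ghat (μ + z) = i := by
      by_cases hμlt : μ 0 < μ 1
      · refine ⟨1, fun z hzA => ?_⟩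
        have habs : μ 1 - μ 0 > Real.sqrt 2 * qν := by
          rwa [abs_of_pos (by linarith)] at hD
        have hzd : |z 1 - z 0| ≤ Real.sqrt 2 * qν := hzA
        have hy : (μ + z) 0 < (μ + z) 1 := by
          have h1 := neg_abs_le (z 1 - z 0)
          have h2 : (μ + z) 1 - (μ + z) 0 = (μ 1 - μ 0) + (z 1 - z 0) := hdiff z
          nlinarith
        rcases hfin2 (ghat (μ + z)) with hg | hg
        · exfalso
          have := hghat (μ + z) 1
          rw [hg] at this
          linarith
        · exact hg
      · refine ⟨0, fun z hzA => ?_⟩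
        have hμlt' : μ 1 < μ 0 := lt_of_le_of_ne (not_lt.mp hμlt) hDne
        have habs : μ 0 - μ 1 > Real.sqrt 2 * qν := by
          rw [abs_sub_comm] at hD
          rwa [abs_of_pos (by linarith)] at hD
        have hzd : |z 1 - z 0| ≤ Real.sqrt 2 * qν := hzA
        have hy : (μ + z) 1 < (μ + z) 0 := by
          have h1 := le_abs_self (z 1 - z 0)
          have h2 : (μ + z) 1 - (μ + z) 0 = (μ 1 - μ 0) + (z 1 - z 0) := hdiff z
          nlinarith
        rcases hfin2 (ghat (μ + z)) with hg | hg
        · exact hg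
        · exfalso
          have := hghat (μ + z) 0
          rw [hg] at this
          linarith
    set M := {z : Fin 2 → ℝ | |z istar| < q1} with hM
    have hMmeas : MeasurableSet M :=
      measurableSet_lt ((measurable_pi_apply istar).abs) measurable_const
    have hPM : ENNReal.ofReal (1 - 0.9 * α) ≤ Pk 2 M := by
      rw [hM, P2_absIoo]
      exact gauss_Ioo_ge h09 h091
    refine final (Aᶜ ∪ Mᶜ) (hAmeas.compl.union hMmeas.compl) ?_ ?_
    · intro z hz
      simp only [Set.compl_union, compl_compl, Set.mem_inter_iff] at hz
      obtain ⟨hzA, hzM⟩ := hz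
      show z ∈ G
      rw [hG]
      simp only [Set.mem_setOf_eq, histar z hzA]
      have harm : (μ + z) istar - μ istar = z istar := by simp
      rw [harm]
      split_ifs with h
      · exact lt_of_lt_of_le hzM hq12
      · exact hzM
    · calc Pk 2 (Aᶜ ∪ Mᶜ) ≤ Pk 2 Aᶜ + Pk 2 Mᶜ := measure_union_le _ _
        _ ≤ ENNReal.ofReal (0.1 * α) + ENNReal.ofReal (0.9 * α) :=
            add_le_add hPAc (compl_bound hMmeas (by linarith) hPM)
        _ = ENNReal.ofReal α := hadd
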